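/- If κ is a regular uncountable cardinal and I is a κ-complete, κ⁺-saturated ideal on κ containing all singletons, then I is precipitous. -/

import Mathlib

open Cardinal

variable {α : Type}

/-- `I` is a proper ideal on (the full powerset of) `α` containing all singletons. -/
def IsIdealOn (I : Set (Set α)) : Prop :=
  (∅ : Set α) ∈ I ∧ (Set.univ : Set α) ∉ I ∧
  (∀ S ∈ I, ∀ T ⊆ S, T ∈ I) ∧ (∀ S ∈ I, ∀ T ∈ I, S ∪ T ∈ I) ∧
  ∀ a : α, ({a} : Set α) ∈ I

/-- `I` is `κ`-complete where `κ = #α`: closed under unions of fewer than `κ` members. -/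
def IsKappaComplete (I : Set (Set α)) : Prop :=
  ∀ s : Set (Set α), #s < #α → s ⊆ I → ⋃₀ s ∈ I

/-- `I` is `κ⁺`-saturated: there is no family of `κ⁺` many `I`-positive sets that are
pairwise almost disjoint modulo `I`. -/
def IsSaturated (I : Set (Set α)) : Prop :=
  ¬ ∃ F : Set (Set α), #F = Order.succ #α ∧ (∀ S ∈ F, S ∉ I) ∧
      ∀ S ∈ F, ∀ T ∈ F, S ≠ T → S ∩ T ∈ I

/-- The histories of the Jech–Prikry game against a strategy `σ` for the player trying
to make the intersection empty, with opponent moves `b`. -/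
def gameHistory (σ : List (Set α) → Set α) (b : ℕ → Set α) : ℕ → List (Set α)
  | 0 => []
  | n + 1 => b n :: σ (gameHistory σ b n) :: gameHistory σ b n

/-- The "empty" player has a winning strategy in the precipitousness game for `I`:
players alternately choose `I`-positive sets, each included in the previous one, and
the empty player wins if the intersection of the play is empty. -/
def EmptyPlayerWins (I : Set (Set α)) : Prop :=
  ∃ σ : List (Set α) → Set α,
    (∀ b : ℕ → Set α, ∀ n : ℕ,
      (∀ m < n, b m ∉ I ∧ b m ⊆ σ (gameHistory σ b m)) →
        σ (gameHistory σ b n) ∉ I ∧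
          ∀ T : Set α, (gameHistory σ b n).head? = some T → σ (gameHistory σ b n) ⊆ T) ∧
    ∀ b : ℕ → Set α, (∀ n, b n ∉ I ∧ b n ⊆ σ (gameHistory σ b n)) → (⋂ n, b n) = ∅

/-- `I` is precipitous: the empty player has no winning strategy in the game of
`I`-positive sets (equivalently, the generic ultrapower is well-founded). -/
def Precipitous (I : Set (Set α)) : Prop :=
  ¬ EmptyPlayerWins I

section Aux

variable (I : Set (Set α)) (σ : List (Set α) → Set α)

/-- response after the (n+1)-st move -/
def stt (n : ℕ) (b : ℕ → Set α) : Set α := σ (gameHistory σ b (n+1))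

/-- the play `b` is legal for its first `n` moves -/
def legalP (n : ℕ) (b : ℕ → Set α) : Prop :=
  ∀ m < n, b m ∉ I ∧ b m ⊆ σ (gameHistory σ b m)

/-- almost disjoint family mod I -/
def adF (W : Set (Set α)) : Prop := ∀ S ∈ W, ∀ T ∈ W, S ∩ T ∉ I → S = T

theorem hist_congr {b b' : ℕ → Set α} {n : ℕ} (h : ∀ m < n, b m = b' m) :
    gameHistory σ b n = gameHistory σ b' n := by
  induction n with
  | zero => rfl
  | succ n ih =>
    have ih' := ih (fun m hm => h m (Nat.lt_succ_of_lt hm))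
    simp [gameHistory, ih', h n (Nat.lt_succ_self n)]

theorem stt_congr {b b' : ℕ → Set α} {n : ℕ} (h : ∀ m ≤ n, b m = b' m) :
    stt σ n b = stt σ n b' := by
  unfold stt
  rw [hist_congr σ (fun m hm => h m (Nat.lt_succ_iff.mp hm))]

theorem exists_maxAD (P : Set (Set α)) :
    ∃ W ⊆ P, adF I W ∧ ∀ Z ∈ P, Z ∉ I → ∃ S ∈ W, Z ∩ S ∉ I := by
  obtain ⟨W, hW⟩ := zorn_subset {W : Set (Set α) | W ⊆ P ∧ adF I W} (by
    intro c hc hchain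
    refine ⟨⋃₀ c, ⟨?_, ?_⟩, fun s hs => Set.subset_sUnion_of_mem hs⟩
    · exact Set.sUnion_subset fun t ht => (hc ht).1
    · intro S hS T hT hST
      obtain ⟨s, hs, hSs⟩ := hS
      obtain ⟨t, ht, hTt⟩ := hT
      rcases hchain.total hs ht with h | h
      · exact (hc ht).2 S (h hSs) T hTt hST
      · exact (hc hs).2 S hSs T (h hTt) hST)
  refine ⟨W, hW.prop.1, hW.prop.2, ?_⟩
  intro Z hZP hZpos
  by_contra hcon
  push_neg at hcon
  have hZW : Z ∉ W := fun hZW => hZpos (by simpa using hcon Z hZW)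
  have hbig : insert Z W ∈ {W : Set (Set α) | W ⊆ P ∧ adF I W} := by
    constructor
    · exact Set.insert_subset hZP hW.prop.1
    · intro S hS T hT hST
      rcases hS with rfl | hS <;> rcases hT with rfl | hT
      · rfl
      · exact absurd (hcon T hT) hST
      · exact absurd (Set.inter_comm S T ▸ hcon S hS) hST
      · exact hW.prop.2 S hS T hT hST
  have := hW.eq_of_subset hbig (Set.subset_insert Z W)
  exact hZW (this ▸ Set.mem_insert Z W)

noncomputable def maxAD (P : Set (Set α)) : Set (Set α) := (exists_maxAD I P).choose

theorem maxAD_spec (P : Set (Set α)) :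
    maxAD I P ⊆ P ∧ adF I (maxAD I P) ∧ ∀ Z ∈ P, Z ∉ I → ∃ S ∈ maxAD I P, Z ∩ S ∉ I :=
  (exists_maxAD I P).choose_spec

def P0 : Set (Set α) := {Z | ∃ c, legalP I σ 1 c ∧ stt σ 0 c = Z}

def Pnext (n : ℕ) (Wn : Set (Set α)) (fn : Set α → ℕ → Set α) : Set (Set α) :=
  {Z | ∃ c, (∃ X ∈ Wn, ∀ m ≤ n, c m = fn X m) ∧ legalP I σ (n+2) c ∧ stt σ (n+1) c = Z}

open scoped Classical in
noncomputable def pick0 (Z : Set α) : ℕ → Set α :=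
  if h : Z ∈ P0 I σ then h.choose else fun _ => ∅

open scoped Classical in
noncomputable def pickN (n : ℕ) (Wn : Set (Set α)) (fn : Set α → ℕ → Set α)
    (Z : Set α) : ℕ → Set α :=
  if h : Z ∈ Pnext I σ n Wn fn then h.choose else fun _ => ∅

noncomputable def WF : ℕ → Set (Set α) × (Set α → ℕ → Set α)
  | 0 => (maxAD I (P0 I σ), pick0 I σ)
  | n+1 => (maxAD I (Pnext I σ n (WF n).1 (WF n).2), pickN I σ n (WF n).1 (WF n).2)

noncomputable def Wlev (n : ℕ) : Set (Set α) := (WF I σ n).1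
noncomputable def flev (n : ℕ) : Set α → ℕ → Set α := (WF I σ n).2

open scoped Classical in
noncomputable def par (n : ℕ) (Z : Set α) : Set α :=
  if h : ∃ X ∈ Wlev I σ n, Z ⊆ X then h.choose else ∅

noncomputable def hcell (r : α → α → Prop) (g : ℕ → Set α → α) : ℕ → Set α → Set α
  | 0, Z => Z \ ⋃₀ {Y | Y ∈ Wlev I σ 0 ∧ r (g 0 Y) (g 0 Z)}
  | n+1, Z => (Z ∩ hcell r g n (par I σ n Z)) \
      ⋃₀ {Y | Y ∈ Wlev I σ (n+1) ∧ r (g (n+1) Y) (g (n+1) Z)}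

variable (hI : IsIdealOn I)
variable (hs1 : ∀ b : ℕ → Set α, ∀ n : ℕ,
      (∀ m < n, b m ∉ I ∧ b m ⊆ σ (gameHistory σ b m)) →
        σ (gameHistory σ b n) ∉ I ∧
          ∀ T : Set α, (gameHistory σ b n).head? = some T → σ (gameHistory σ b n) ⊆ T)

include hI in
theorem subI {S T : Set α} (hS : S ∈ I) (hT : T ⊆ S) : T ∈ I := hI.2.2.1 S hS T hT

include hI in
theorem unionI {S T : Set α} (hS : S ∈ I) (hT : T ∈ I) : S ∪ T ∈ I := hI.2.2.2.1 S hS T hT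

include hI in
theorem posMono {S T : Set α} (h : S ⊆ T) (hS : S ∉ I) : T ∉ I := fun hT => hS (subI I hI hT h)

include hs1 in
theorem stt_pos {n : ℕ} {b : ℕ → Set α} (h : legalP I σ (n+1) b) : stt σ n b ∉ I :=
  (hs1 b (n+1) h).1

include hs1 in
theorem stt_sub_move {n : ℕ} {b : ℕ → Set α} (h : legalP I σ (n+1) b) : stt σ n b ⊆ b n :=
  (hs1 b (n+1) h).2 (b n) rfl

theorem legal_mono {m n : ℕ} {b : ℕ → Set α} (hmn : m ≤ n) (h : legalP I σ n b) :
    legalP I σ m b := fun k hk => h k (lt_of_lt_of_le hk hmn)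

include hs1 in
theorem stt_sub_S0 {n : ℕ} {b : ℕ → Set α} (h : legalP I σ (n+1) b) : stt σ n b ⊆ σ [] := by
  induction n with
  | zero =>
    have h0 := stt_sub_move I σ hs1 h
    have : b 0 ⊆ σ (gameHistory σ b 0) := (h 0 (Nat.lt_succ_self 0)).2
    exact h0.trans this
  | succ n ih =>
    have h1 : stt σ (n+1) b ⊆ b (n+1) := stt_sub_move I σ hs1 h
    have h2 : b (n+1) ⊆ σ (gameHistory σ b (n+1)) := (h (n+1) (Nat.lt_succ_self _)).2
    exact (h1.trans h2).trans (ih (legal_mono I σ (Nat.le_succ _) h))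

include hs1 in
theorem P0_pos : ∀ Z ∈ P0 I σ, Z ∉ I := by
  rintro Z ⟨c, hc, rfl⟩
  exact stt_pos I σ hs1 hc

include hs1 in
theorem Pnext_pos {n : ℕ} {Wn : Set (Set α)} {fn : Set α → ℕ → Set α} :
    ∀ Z ∈ Pnext I σ n Wn fn, Z ∉ I := by
  rintro Z ⟨c, _, hc, rfl⟩
  exact stt_pos I σ hs1 hc

theorem Wlev_zero : Wlev I σ 0 = maxAD I (P0 I σ) := rfl

theorem Wlev_succ (n : ℕ) :
    Wlev I σ (n+1) = maxAD I (Pnext I σ n (Wlev I σ n) (flev I σ n)) := rfl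

theorem flev_zero : flev I σ 0 = pick0 I σ := rfl

theorem flev_succ (n : ℕ) :
    flev I σ (n+1) = pickN I σ n (Wlev I σ n) (flev I σ n) := rfl

theorem W_ad (n : ℕ) : adF I (Wlev I σ n) := by
  cases n with
  | zero => exact (maxAD_spec I _).2.1
  | succ n => exact (maxAD_spec I _).2.1

theorem W_max0 : ∀ Z ∈ P0 I σ, Z ∉ I → ∃ S ∈ Wlev I σ 0, Z ∩ S ∉ I :=
  (maxAD_spec I _).2.2

theorem W_maxS (n : ℕ) : ∀ Z ∈ Pnext I σ n (Wlev I σ n) (flev I σ n), Z ∉ I →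
    ∃ S ∈ Wlev I σ (n+1), Z ∩ S ∉ I :=
  (maxAD_spec I _).2.2

theorem flev0_spec {X : Set α} (hX : X ∈ Wlev I σ 0) :
    legalP I σ 1 (flev I σ 0 X) ∧ stt σ 0 (flev I σ 0 X) = X := by
  have hP : X ∈ P0 I σ := (maxAD_spec I _).1 hX
  rw [flev_zero]
  unfold pick0
  rw [dif_pos hP]
  exact hP.choose_spec

theorem flevS_spec {n : ℕ} {X : Set α} (hX : X ∈ Wlev I σ (n+1)) :
    (∃ X' ∈ Wlev I σ n, ∀ m ≤ n, flev I σ (n+1) X m = flev I σ n X' m) ∧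
      legalP I σ (n+2) (flev I σ (n+1) X) ∧ stt σ (n+1) (flev I σ (n+1) X) = X := by
  have hP : X ∈ Pnext I σ n (Wlev I σ n) (flev I σ n) := (maxAD_spec I _).1 hX
  rw [flev_succ]
  unfold pickN
  rw [dif_pos hP]
  exact hP.choose_spec

theorem W_legal {n : ℕ} {X : Set α} (hX : X ∈ Wlev I σ n) :
    legalP I σ (n+1) (flev I σ n X) ∧ stt σ n (flev I σ n X) = X := by
  cases n with
  | zero => exact flev0_spec I σ hX
  | succ n => exact (flevS_spec I σ hX).2

include hs1 in
theorem W_pos {n : ℕ} {X : Set α} (hX : X ∈ Wlev I σ n) : X ∉ I := by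
  obtain ⟨hleg, hstt⟩ := W_legal I σ hX
  exact hstt ▸ stt_pos I σ hs1 hleg

include hs1 in
theorem W_subS0 {n : ℕ} {X : Set α} (hX : X ∈ Wlev I σ n) : X ⊆ σ [] := by
  obtain ⟨hleg, hstt⟩ := W_legal I σ hX
  exact hstt ▸ stt_sub_S0 I σ hs1 hleg

include hs1 in
theorem W_nest {n : ℕ} {Z : Set α} (hZ : Z ∈ Wlev I σ (n+1)) :
    stt σ n (flev I σ (n+1) Z) ∈ Wlev I σ n ∧ Z ⊆ stt σ n (flev I σ (n+1) Z) := by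
  obtain ⟨⟨X', hX', hag⟩, hleg, hstt⟩ := flevS_spec I σ hZ
  have he : stt σ n (flev I σ (n+1) Z) = X' := by
    rw [stt_congr σ hag]
    exact (W_legal I σ hX').2
  constructor
  · rw [he]; exact hX'
  · have h1 := stt_sub_move I σ hs1 hleg
    rw [hstt] at h1
    have h2 : flev I σ (n+1) Z (n+1) ⊆ σ (gameHistory σ (flev I σ (n+1) Z) (n+1)) :=
      (hleg (n+1) (Nat.lt_succ_self _)).2
    exact h1.trans h2

include hI in
omit hs1 in
theorem parent_unique {n : ℕ} {Z X X' : Set α} (hZpos : Z ∉ I) (hX : X ∈ Wlev I σ n)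
    (hX' : X' ∈ Wlev I σ n) (h1 : Z ⊆ X) (h2 : Z ⊆ X') : X = X' :=
  W_ad I σ n X hX X' hX' (posMono I hI (Set.subset_inter h1 h2) hZpos)

include hs1 in
theorem par_spec {n : ℕ} {Z : Set α} (hZ : Z ∈ Wlev I σ (n+1)) :
    par I σ n Z ∈ Wlev I σ n ∧ Z ⊆ par I σ n Z := by
  have hex : ∃ X ∈ Wlev I σ n, Z ⊆ X :=
    ⟨stt σ n (flev I σ (n+1) Z), (W_nest I σ hs1 hZ).1, (W_nest I σ hs1 hZ).2⟩
  unfold par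
  rw [dif_pos hex]
  exact hex.choose_spec

include hI hs1 in
theorem par_eq {n : ℕ} {Z X : Set α} (hZ : Z ∈ Wlev I σ (n+1)) (hX : X ∈ Wlev I σ n)
    (h : Z ⊆ X) : par I σ n Z = X :=
  parent_unique I σ hI (W_pos I σ hs1 hZ) (par_spec I σ hs1 hZ).1 hX
    (par_spec I σ hs1 hZ).2 h

include hI hs1 in
theorem Mmax (n : ℕ) : ∀ Z, Z ∉ I → Z ⊆ σ [] → ∃ S ∈ Wlev I σ n, Z ∩ S ∉ I := by
  induction n with
  | zero =>
    intro Z hZpos hZsub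
    set c : ℕ → Set α := fun m => if m = 0 then Z else ∅ with hc
    have hc0 : c 0 = Z := rfl
    have hleg : legalP I σ 1 c := by
      intro m hm
      interval_cases m
      exact ⟨hc0 ▸ hZpos, hc0 ▸ hZsub⟩
    have hmem : stt σ 0 c ∈ P0 I σ := ⟨c, hleg, rfl⟩
    obtain ⟨S, hS, hpos⟩ := W_max0 I σ (stt σ 0 c) hmem (stt_pos I σ hs1 hleg)
    refine ⟨S, hS, posMono I hI (Set.inter_subset_inter_left S ?_) hpos⟩
    exact hc0 ▸ stt_sub_move I σ hs1 hleg
  | succ n ih =>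
    intro Z hZpos hZsub
    obtain ⟨X, hX, hZX⟩ := ih Z hZpos hZsub
    set c : ℕ → Set α := flev I σ n X with hcdef
    obtain ⟨hcleg, hcstt⟩ := W_legal I σ hX
    set c' : ℕ → Set α := fun m => if m = n+1 then Z ∩ X else c m with hc'def
    have hagree : ∀ m < n+1, c' m = c m := by
      intro m hm
      simp only [hc'def]
      rw [if_neg (Nat.ne_of_lt hm)]
    have hhist : ∀ k ≤ n+1, gameHistory σ c' k = gameHistory σ c k := fun k hk =>
      hist_congr σ (fun m hm => hagree m (lt_of_lt_of_le hm hk))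
    have hc'top : c' (n+1) = Z ∩ X := by simp [hc'def]
    have hleg' : legalP I σ (n+2) c' := by
      intro m hm
      rcases Nat.lt_succ_iff_lt_or_eq.mp hm with hm' | rfl
      · rw [hagree m hm', hist_congr σ (fun k hk => hagree k (lt_trans hk hm'))]
        exact hcleg m hm'
      · constructor
        · rw [hc'top]; exact hZX
        · rw [hc'top]
          have : σ (gameHistory σ c' (n+1)) = X := by
            rw [hhist (n+1) le_rfl]; exact hcstt
          rw [this]
          exact Set.inter_subset_right
    have hmem : stt σ (n+1) c' ∈ Pnext I σ n (Wlev I σ n) (flev I σ n) :=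
      ⟨c', ⟨X, hX, fun m hm => hagree m (Nat.lt_succ_of_le hm)⟩, hleg', rfl⟩
    obtain ⟨S, hS, hpos⟩ := W_maxS I σ n (stt σ (n+1) c') hmem (stt_pos I σ hs1 hleg')
    refine ⟨S, hS, posMono I hI (Set.inter_subset_inter_left S ?_) hpos⟩
    have := stt_sub_move I σ hs1 hleg'
    rw [hc'top] at this
    exact this.trans Set.inter_subset_left

theorem ad_card (hsat : IsSaturated I) {W : Set (Set α)} (hpos : ∀ S ∈ W, S ∉ I)
    (had : adF I W) : #W ≤ #α := by
  by_contra h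
  push_neg at h
  obtain ⟨F, hFW, hF⟩ := Cardinal.le_mk_iff_exists_subset.mp (Order.succ_le_of_lt h)
  refine hsat ⟨F, hF, fun S hS => hpos S (hFW hS), fun S hS T hT hne => ?_⟩
  by_contra h'
  exact hne (had S (hFW hS) T (hFW hT) h')

include hs1 in
theorem W_card (hsat : IsSaturated I) (n : ℕ) : #(Wlev I σ n) ≤ #α :=
  ad_card I hsat (fun _ hS => W_pos I σ hs1 hS) (W_ad I σ n)

theorem hcell_shape (r : α → α → Prop) (g : ℕ → Set α → α) (n : ℕ) (Z : Set α) :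
    ∃ A : Set α, A ⊆ Z ∧
      hcell I σ r g n Z = A \ ⋃₀ {Y | Y ∈ Wlev I σ n ∧ r (g n Y) (g n Z)} := by
  cases n with
  | zero => exact ⟨Z, subset_rfl, rfl⟩
  | succ n => exact ⟨Z ∩ hcell I σ r g n (par I σ n Z), Set.inter_subset_left, rfl⟩

theorem hcell_sub (r : α → α → Prop) (g : ℕ → Set α → α) (n : ℕ) (Z : Set α) :
    hcell I σ r g n Z ⊆ Z := by
  obtain ⟨A, hA, hEq⟩ := hcell_shape I σ r g n Z
  rw [hEq]
  exact Set.diff_subset.trans hA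

theorem hcell_succ_sub_par (r : α → α → Prop) (g : ℕ → Set α → α) (n : ℕ) (Z : Set α) :
    hcell I σ r g (n+1) Z ⊆ hcell I σ r g n (par I σ n Z) :=
  fun _ hx => hx.1.2

theorem hcell_disj (r : α → α → Prop) (g : ℕ → Set α → α) (wo : IsWellOrder α r)
    (hg : ∀ n, Set.InjOn (g n) (Wlev I σ n)) {n : ℕ} {Z Z' : Set α}
    (hZ : Z ∈ Wlev I σ n) (hZ' : Z' ∈ Wlev I σ n) (hne : Z ≠ Z') :
    hcell I σ r g n Z ∩ hcell I σ r g n Z' = ∅ := by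
  haveI := wo
  have key : ∀ Y Y' : Set α, Y ∈ Wlev I σ n → r (g n Y) (g n Y') →
      hcell I σ r g n Y ∩ hcell I σ r g n Y' = ∅ := by
    intro Y Y' h1 hr
    rw [Set.eq_empty_iff_forall_notMem]
    rintro x ⟨hx1, hx2⟩
    obtain ⟨A, hA, hEq⟩ := hcell_shape I σ r g n Y'
    rw [hEq] at hx2
    exact hx2.2 ⟨Y, ⟨h1, hr⟩, hcell_sub I σ r g n Y hx1⟩
  rcases @trichotomous α r _ (g n Z) (g n Z') with h | h | h
  · exact key Z Z' hZ h
  · exact absurd (hg n hZ hZ' h) hne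
  · rw [Set.inter_comm]
    exact key Z' Z hZ' h

include hI in
theorem earlier_null (r : α → α → Prop) (g : ℕ → Set α → α) (wo : IsWellOrder α r)
    (hrtype : (#α).ord = Ordinal.type r) (hg : ∀ n, Set.InjOn (g n) (Wlev I σ n))
    (hcompl : IsKappaComplete I) (n : ℕ) {Z : Set α} (hZ : Z ∈ Wlev I σ n) :
    Z ∩ ⋃₀ {Y | Y ∈ Wlev I σ n ∧ r (g n Y) (g n Z)} ∈ I := by
  haveI := wo
  set T := {Y | Y ∈ Wlev I σ n ∧ r (g n Y) (g n Z)} with hT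
  have hsubI : (fun Y => Z ∩ Y) '' T ⊆ I := by
    rintro _ ⟨Y, ⟨hYW, hYr⟩, rfl⟩
    by_contra hp
    have heq := W_ad I σ n Z hZ Y hYW hp
    rw [← heq] at hYr
    exact (irrefl (g n Z)) hYr
  have hcard : #((fun Y => Z ∩ Y) '' T) < #α := by
    refine lt_of_le_of_lt Cardinal.mk_image_le ?_
    have hinj : #T ≤ #{a // r a (g n Z)} := by
      refine Cardinal.mk_le_of_injective
        (f := fun (Y : T) => (⟨g n Y.1, Y.2.2⟩ : {a // r a (g n Z)})) ?_
      intro Y1 Y2 h12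
      exact Subtype.ext (hg n Y1.2.1 Y2.2.1 (congrArg Subtype.val h12))
    refine lt_of_le_of_lt hinj ?_
    rw [← Ordinal.card_typein]
    exact Cardinal.lt_ord.mp (hrtype ▸ Ordinal.typein_lt_type r (g n Z))
  refine subI I hI (hcompl _ hcard hsubI) ?_
  rintro x ⟨hxZ, t, htT, hxt⟩
  exact ⟨Z ∩ t, ⟨t, htT, rfl⟩, hxZ, hxt⟩

include hI hs1 in
theorem hcell_err (r : α → α → Prop) (g : ℕ → Set α → α) (wo : IsWellOrder α r)
    (hrtype : (#α).ord = Ordinal.type r) (hg : ∀ n, Set.InjOn (g n) (Wlev I σ n))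
    (hcompl : IsKappaComplete I) (n : ℕ) :
    ∀ Z ∈ Wlev I σ n, Z \ hcell I σ r g n Z ∈ I := by
  induction n with
  | zero =>
    intro Z hZ
    refine subI I hI (earlier_null I σ hI r g wo hrtype hg hcompl 0 hZ) ?_
    rintro x ⟨hxZ, hxn⟩
    refine ⟨hxZ, ?_⟩
    by_contra h
    exact hxn ⟨hxZ, h⟩
  | succ n ih =>
    intro Z hZ
    have hpar := par_spec I σ hs1 hZ
    have hu : (par I σ n Z \ hcell I σ r g n (par I σ n Z)) ∪
        (Z ∩ ⋃₀ {Y | Y ∈ Wlev I σ (n+1) ∧ r (g (n+1) Y) (g (n+1) Z)}) ∈ I :=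
      unionI I hI (ih (par I σ n Z) hpar.1)
        (earlier_null I σ hI r g wo hrtype hg hcompl (n+1) hZ)
    refine subI I hI hu ?_
    rintro x ⟨hxZ, hxn⟩
    by_cases hU : x ∈ ⋃₀ {Y | Y ∈ Wlev I σ (n+1) ∧ r (g (n+1) Y) (g (n+1) Z)}
    · exact Or.inr ⟨hxZ, hU⟩
    · refine Or.inl ⟨hpar.2 hxZ, fun hc => ?_⟩
      exact hxn ⟨⟨hxZ, hc⟩, hU⟩

def Ulev (r : α → α → Prop) (g : ℕ → Set α → α) (n : ℕ) : Set α :=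
  {x | ∃ Z ∈ Wlev I σ n, x ∈ hcell I σ r g n Z}

include hI hs1 in
theorem U_cov (r : α → α → Prop) (g : ℕ → Set α → α) (wo : IsWellOrder α r)
    (hrtype : (#α).ord = Ordinal.type r) (hg : ∀ n, Set.InjOn (g n) (Wlev I σ n))
    (hcompl : IsKappaComplete I) (n : ℕ) :
    σ [] \ Ulev I σ r g n ∈ I := by
  by_contra hD
  obtain ⟨S, hS, hpos⟩ := Mmax I σ hI hs1 n _ hD Set.diff_subset
  apply hpos
  refine subI I hI (hcell_err I σ hI hs1 r g wo hrtype hg hcompl n S hS) ?_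
  rintro x ⟨⟨_, hx2⟩, hxS⟩
  exact ⟨hxS, fun hc => hx2 ⟨S, hS, hc⟩⟩

end Aux

/-- If `κ` is a regular uncountable cardinal and `I` is a `κ`-complete, `κ⁺`-saturated
ideal on `κ` containing all singletons, then `I` is precipitous. -/
theorem precipitous_of_saturated (hreg : (#α).IsRegular) (hunc : aleph 0 < #α)
    (I : Set (Set α)) (hI : IsIdealOn I) (hcompl : IsKappaComplete I)
    (hsat : IsSaturated I) : Precipitous I := by
  rintro ⟨σ, hs1, hs2⟩
  classical
  obtain ⟨r, wo, hrtype⟩ := Cardinal.ord_eq α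
  haveI := wo
  have hα : Nonempty α :=
    Cardinal.mk_ne_zero_iff.mp (lt_of_le_of_lt zero_le hunc).ne'
  obtain ⟨a0⟩ := hα
  have hE : ∀ n, Nonempty ((Wlev I σ n) ↪ α) := fun n =>
    (Cardinal.le_def _ _).mp (W_card I σ hs1 hsat n)
  let e : ∀ n, (Wlev I σ n) ↪ α := fun n => (hE n).some
  let g : ℕ → Set α → α := fun n Z => if h : Z ∈ Wlev I σ n then e n ⟨Z, h⟩ else a0
  have hg : ∀ n, Set.InjOn (g n) (Wlev I σ n) := by
    intro n Y hY Z hZ hYZ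
    have hYZ' : e n ⟨Y, hY⟩ = e n ⟨Z, hZ⟩ := by
      simpa only [g, dif_pos hY, dif_pos hZ] using hYZ
    exact congrArg Subtype.val ((e n).injective hYZ')
  have hScov : ∀ n, σ [] \ Ulev I σ r g n ∈ I := fun n =>
    U_cov I σ hI hs1 r g wo hrtype hg hcompl n
  have hN : (⋃ n, (σ [] \ Ulev I σ r g n)) ∈ I := by
    have hra : #(Set.range fun n => σ [] \ Ulev I σ r g n) < #α := by
      refine lt_of_le_of_lt Cardinal.mk_range_le ?_
      rw [Cardinal.mk_nat, ← Cardinal.aleph_zero]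
      exact hunc
    rw [← Set.sUnion_range]
    exact hcompl _ hra (by rintro _ ⟨n, rfl⟩; exact hScov n)
  have hS0 : σ [] ∉ I :=
    (hs1 (fun _ => ∅) 0 (fun m hm => absurd hm (Nat.not_lt_zero m))).1
  have hpos : (σ [] \ ⋃ n, (σ [] \ Ulev I σ r g n)) ∉ I := fun h =>
    hS0 (subI I hI (unionI I hI h hN) (fun y hy => by
      by_cases hyN : y ∈ ⋃ n, (σ [] \ Ulev I σ r g n)
      · exact Or.inr hyN
      · exact Or.inl ⟨hy, hyN⟩))
  have hne : (σ [] \ ⋃ n, (σ [] \ Ulev I σ r g n)).Nonempty := by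
    rw [Set.nonempty_iff_ne_empty]
    intro h
    exact hpos (h ▸ hI.1)
  obtain ⟨x, hxS0, hxN⟩ := hne
  have hxU : ∀ n, ∃ Z ∈ Wlev I σ n, x ∈ hcell I σ r g n Z := by
    intro n
    by_contra h
    exact hxN (Set.mem_iUnion.mpr ⟨n, hxS0, h⟩)
  choose X hXW hXc using hxU
  have hparX : ∀ n, par I σ n (X (n+1)) = X n := by
    intro n
    have h1 : x ∈ hcell I σ r g n (par I σ n (X (n+1))) :=
      hcell_succ_sub_par I σ r g n (X (n+1)) (hXc (n+1))
    by_contra hne'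
    have hd := hcell_disj I σ r g wo hg (par_spec I σ hs1 (hXW (n+1))).1 (hXW n) hne'
    exact Set.eq_empty_iff_forall_notMem.mp hd x ⟨h1, hXc n⟩
  have hagree : ∀ n, ∀ m ≤ n, flev I σ (n+1) (X (n+1)) m = flev I σ n (X n) m := by
    intro n m hm
    obtain ⟨⟨X', hX', hag⟩, hleg, hstt⟩ := flevS_spec I σ (hXW (n+1))
    have hXX' : X' = X n := by
      have h1 : X (n+1) ⊆ stt σ n (flev I σ (n+1) (X (n+1))) :=
        (W_nest I σ hs1 (hXW (n+1))).2
      have h2 : stt σ n (flev I σ (n+1) (X (n+1))) = X' := by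
        rw [stt_congr σ hag]; exact (W_legal I σ hX').2
      rw [h2] at h1
      rw [← par_eq I σ hI hs1 (hXW (n+1)) hX' h1, hparX n]
    rw [hag m hm, hXX']
  have hb : ∀ n, ∀ m ≤ n, flev I σ n (X n) m = flev I σ m (X m) m := by
    intro n
    induction n with
    | zero => intro m hm; interval_cases m; rfl
    | succ n ih =>
      intro m hm
      rcases eq_or_lt_of_le hm with rfl | hm'
      · rfl
      · have hmn : m ≤ n := Nat.lt_succ_iff.mp hm'
        rw [hagree n m hmn]
        exact ih m hmn
  set b : ℕ → Set α := fun m => flev I σ m (X m) m with hbdef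
  have hhistb : ∀ k, gameHistory σ b k = gameHistory σ (flev I σ k (X k)) k := by
    intro k
    exact hist_congr σ (fun m hm => (hb k m (le_of_lt hm)).symm)
  have hlegb : ∀ k, b k ∉ I ∧ b k ⊆ σ (gameHistory σ b k) := by
    intro k
    have hk := (W_legal I σ (hXW k)).1 k (Nat.lt_succ_self k)
    exact ⟨hk.1, by rw [hhistb k]; exact hk.2⟩
  have hxb : ∀ k, x ∈ b k := by
    intro k
    have h1 : x ∈ X k := hcell_sub I σ r g k (X k) (hXc k)
    have h2 : X k ⊆ flev I σ k (X k) k := by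
      have h3 := stt_sub_move I σ hs1 (W_legal I σ (hXW k)).1
      rw [(W_legal I σ (hXW k)).2] at h3
      exact h3
    exact h2 h1
  have hfin := hs2 b hlegb
  exact Set.eq_empty_iff_forall_notMem.mp hfin x (Set.mem_iInter.mpr hxb)
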